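/- Let k be a field, R a k-algebra, and A an R-algebra. Let L be a field extension of k such that A ⊗_k L is flat over R ⊗_k L. Then A is flat over R. -/

import Mathlib

open TensorProduct

/-- The natural algebra structure of `R ⊗[k] L` on `A ⊗[k] L` induced by `R → A`. -/
noncomputable local instance tensorBaseAlgebra
    (k : Type*) [CommRing k] (R : Type*) [CommRing R] [Algebra k R]
    (A : Type*) [CommRing A] [Algebra k A] [Algebra R A] [IsScalarTower k R A]
    (L : Type*) [CommRing L] [Algebra k L] :
    Algebra (R ⊗[k] L) (A ⊗[k] L) :=
  (Algebra.TensorProduct.map (IsScalarTower.toAlgHom k R A) (AlgHom.id k L)).toRingHom.toAlgebra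

/-- Let `k` be a field, `R` a `k`-algebra, `A` an `R`-algebra, and `L` a
field extension of `k` such that `A ⊗[k] L` is flat over `R ⊗[k] L`.  Then `A` is flat
over `R`. -/
theorem flat_descent_of_baseChange
    (k : Type*) [Field k] (R : Type*) [CommRing R] [Algebra k R]
    (A : Type*) [CommRing A] [Algebra k A] [Algebra R A] [IsScalarTower k R A]
    (L : Type*) [Field L] [Algebra k L]
    (hflat : Module.Flat (R ⊗[k] L) (A ⊗[k] L)) :
    Module.Flat R A := by
  have tower : IsScalarTower R (R ⊗[k] L) (A ⊗[k] L) := by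
    apply IsScalarTower.of_algebraMap_smul
    intro r x
    rw [Algebra.smul_def, RingHom.algebraMap_toAlgebra]
    have h : (Algebra.TensorProduct.map (IsScalarTower.toAlgHom k R A)
        (AlgHom.id k L)).toRingHom ((algebraMap R (R ⊗[k] L)) r)
        = (algebraMap R A r) ⊗ₜ[k] (1 : L) := by
      simp [Algebra.TensorProduct.algebraMap_apply]
    rw [h]
    induction x using TensorProduct.induction_on with
    | zero => simp
    | tmul a l =>
        simp [Algebra.TensorProduct.tmul_mul_tmul, TensorProduct.smul_tmul', Algebra.smul_def]
    | add x y hx hy => simp [mul_add, hx, hy]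
  have flatRL : Module.Flat R (R ⊗[k] L) := Module.Flat.baseChange k R L
  have flatAL : Module.Flat R (A ⊗[k] L) := Module.Flat.trans R (R ⊗[k] L) (A ⊗[k] L)
  -- retraction
  obtain ⟨g, hg⟩ := (Algebra.linearMap k L).exists_leftInverse_of_injective
    (LinearMap.ker_eq_bot.mpr (algebraMap k L).injective)
  let i : A →ₗ[R] A ⊗[k] L :=
    { toFun := fun a => a ⊗ₜ 1
      map_add' := fun a b => by simp [add_tmul]
      map_smul' := fun r a => by
        simp [TensorProduct.smul_tmul'] }
  let r : A ⊗[k] L →ₗ[R] A :=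
    ((TensorProduct.AlgebraTensorModule.rid k A A).toLinearMap.comp
      (LinearMap.baseChange A g)).restrictScalars R
  apply Module.Flat.of_retract i r
  ext a
  have h1 : g 1 = 1 := by
    have := LinearMap.congr_fun hg 1
    simpa using this
  simp [i, r, h1]
  exact (by simp [h1] : (TensorProduct.AlgebraTensorModule.rid k A A)
    (LinearMap.baseChange A g (a ⊗ₜ[k] (1 : L))) = a)
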